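/- For every integer k ≥ 3 there exists a locally Ore graph G_k with minimum degree k²+1 and edge-connectivity k². Explicitly, G_k is obtained from two disjoint copies of K_{k²+2} by adding all k² edges between a fixed set of k vertices in one copy and a fixed set of k vertices in the other copy. -/

import Mathlib

noncomputable def locDeg {V : Type*} (G : SimpleGraph V) (v u : V) : ℕ :=
  (G.neighborSet v ∩ G.neighborSet u).ncard

noncomputable def degN {V : Type*} (G : SimpleGraph V) (v : V) : ℕ :=
  (G.neighborSet v).ncard

def LocallyOre {V : Type*} (G : SimpleGraph V) : Prop :=
  ∀ v u w : V, G.Adj v u → G.Adj v w → u ≠ w → ¬ G.Adj u w →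
    degN G v ≤ locDeg G v u + locDeg G v w

noncomputable def minDeg {V : Type*} [Fintype V] (G : SimpleGraph V) : ℕ :=
  sInf {n | ∃ v : V, degN G v = n}

noncomputable def edgeConn {V : Type*} [Fintype V] (G : SimpleGraph V) : ℕ :=
  sInf {n | ∃ F : Finset (Sym2 V), ↑F ⊆ G.edgeSet ∧ F.card = n ∧
    ¬ (G.deleteEdges ↑F).Connected}

/-- `Gk k`: two disjoint copies of `K_{k²+2}`, with all `k²` edges added between the first
`k` vertices of one copy and the first `k` vertices of the other copy. -/
def Gk (k : ℕ) : SimpleGraph (Fin (k ^ 2 + 2) ⊕ Fin (k ^ 2 + 2)) where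
  Adj x y :=
    match x, y with
    | Sum.inl a, Sum.inl b => a ≠ b
    | Sum.inl a, Sum.inr b => a.val < k ∧ b.val < k
    | Sum.inr a, Sum.inl b => a.val < k ∧ b.val < k
    | Sum.inr a, Sum.inr b => a ≠ b
  symm := by
    constructor
    rintro (a | a) (b | b) h
    · exact Ne.symm h
    · exact ⟨h.2, h.1⟩
    · exact ⟨h.2, h.1⟩
    · exact Ne.symm h
  loopless := by
    constructor
    rintro (a | a) h
    · exact h rfl
    · exact h rfl

section Helpers

open Set SimpleGraph

variable {k : ℕ}

/-! ### ncard computations in `Fin (k^2+2)` -/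

lemma c1 (m : ℕ) (a : Fin (m + 2)) : ({a}ᶜ : Set (Fin (m + 2))).ncard = m + 1 := by
  rw [Set.ncard_eq_toFinset_card']
  simp [Finset.card_compl]

lemma c2 (m q : ℕ) (h : q ≤ m + 2) : ({b : Fin (m + 2) | b.val < q}).ncard = q := by
  rw [Set.ncard_eq_toFinset_card']
  simp only [Set.toFinset_setOf]
  rw [show (Finset.filter (fun x : Fin (m+2) => ↑x < q) Finset.univ)
      = Finset.map (Fin.castLEEmb h) Finset.univ from ?_]
  · simp
  · ext b
    simp only [Finset.mem_filter, Finset.mem_univ, true_and, Finset.mem_map]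
    constructor
    · intro hb; exact ⟨⟨b, hb⟩, by ext; simp⟩
    · rintro ⟨c, rfl⟩; exact c.2

lemma c3 (m : ℕ) (a b : Fin (m + 2)) (hab : a ≠ b) :
    ({a, b}ᶜ : Set (Fin (m + 2))).ncard = m := by
  rw [Set.ncard_eq_toFinset_card']
  simp [Finset.card_compl, Finset.card_insert_of_notMem, hab]

lemma c4 (m q : ℕ) (h : q ≤ m + 2) (a : Fin (m + 2)) (ha : a.val < q) :
    ({x : Fin (m + 2) | x ≠ a ∧ x.val < q}).ncard = q - 1 := by
  have he : {x : Fin (m + 2) | x ≠ a ∧ x.val < q} = {x : Fin (m+2) | x.val < q} \ {a} := by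
    ext x; simp [and_comm]
  rw [he, Set.ncard_diff_singleton_of_mem (show a ∈ {x : Fin (m+2) | x.val < q} from ha),
    c2 m q h]

/-! ### neighbor sets of `Gk` -/

lemma nbhd_ll (a : Fin (k^2+2)) (ha : ¬ a.val < k) :
    (Gk k).neighborSet (.inl a) = Sum.inl '' {a}ᶜ := by
  ext (x | x) <;> simp [SimpleGraph.mem_neighborSet, Gk, ha, eq_comm]

lemma nbhd_ls (a : Fin (k^2+2)) (ha : a.val < k) :
    (Gk k).neighborSet (.inl a) = Sum.inl '' {a}ᶜ ∪ Sum.inr '' {b | b.val < k} := by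
  ext (x | x) <;> simp [SimpleGraph.mem_neighborSet, Gk, ha, eq_comm]

lemma nbhd_rl (a : Fin (k^2+2)) (ha : ¬ a.val < k) :
    (Gk k).neighborSet (.inr a) = Sum.inr '' {a}ᶜ := by
  ext (x | x) <;> simp [SimpleGraph.mem_neighborSet, Gk, ha, eq_comm]

lemma nbhd_rs (a : Fin (k^2+2)) (ha : a.val < k) :
    (Gk k).neighborSet (.inr a) = Sum.inr '' {a}ᶜ ∪ Sum.inl '' {b | b.val < k} := by
  ext (x | x) <;> simp [SimpleGraph.mem_neighborSet, Gk, ha, eq_comm]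

lemma disj_lr (s t : Set (Fin (k^2+2))) :
    Disjoint (Sum.inl '' s : Set (Fin (k^2+2) ⊕ Fin (k^2+2))) (Sum.inr '' t) := by
  rw [Set.disjoint_left]
  rintro x ⟨y, -, rfl⟩ ⟨z, -, h⟩
  exact absurd h (by simp)

/-! ### degrees -/

lemma degN_lb (a : Fin (k^2+2)) (ha : ¬ a.val < k) : degN (Gk k) (.inl a) = k^2 + 1 := by
  rw [degN, nbhd_ll a ha, Set.ncard_image_of_injective _ Sum.inl_injective, c1]

lemma degN_ls (a : Fin (k^2+2)) (ha : a.val < k) : degN (Gk k) (.inl a) = k^2 + 1 + k := by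
  have hkn : k ≤ k^2 + 2 := by nlinarith
  rw [degN, nbhd_ls a ha, Set.ncard_union_eq (disj_lr _ _) (Set.toFinite _) (Set.toFinite _),
    Set.ncard_image_of_injective _ Sum.inl_injective,
    Set.ncard_image_of_injective _ Sum.inr_injective, c1, c2 _ _ hkn]

lemma degN_rb (a : Fin (k^2+2)) (ha : ¬ a.val < k) : degN (Gk k) (.inr a) = k^2 + 1 := by
  rw [degN, nbhd_rl a ha, Set.ncard_image_of_injective _ Sum.inr_injective, c1]

lemma degN_rs (a : Fin (k^2+2)) (ha : a.val < k) : degN (Gk k) (.inr a) = k^2 + 1 + k := by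
  have hkn : k ≤ k^2 + 2 := by nlinarith
  rw [degN, nbhd_rs a ha, Set.ncard_union_eq (disj_lr _ _).symm (Set.toFinite _) (Set.toFinite _),
    Set.ncard_image_of_injective _ Sum.inr_injective,
    Set.ncard_image_of_injective _ Sum.inl_injective, c1, c2 _ _ hkn]

/-! ### local degrees -/

lemma locDeg_ll (a b : Fin (k^2+2)) (ha : a.val < k) (hb : ¬ b.val < k) (hab : a ≠ b) :
    locDeg (Gk k) (.inl a) (.inl b) = k^2 := by
  rw [locDeg, nbhd_ls a ha, nbhd_ll b hb]
  have he : (Sum.inl '' {a}ᶜ ∪ Sum.inr '' {b' : Fin (k^2+2) | b'.val < k}) ∩ Sum.inl '' {b}ᶜ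
      = Sum.inl '' ({a, b}ᶜ : Set (Fin (k^2+2))) := by
    ext (x | x) <;> simp [not_or, and_comm]
  rw [he, Set.ncard_image_of_injective _ Sum.inl_injective, c3 _ _ _ hab]

lemma locDeg_rr (a b : Fin (k^2+2)) (ha : a.val < k) (hb : ¬ b.val < k) (hab : a ≠ b) :
    locDeg (Gk k) (.inr a) (.inr b) = k^2 := by
  rw [locDeg, nbhd_rs a ha, nbhd_rl b hb]
  have he : (Sum.inr '' {a}ᶜ ∪ Sum.inl '' {b' : Fin (k^2+2) | b'.val < k}) ∩ Sum.inr '' {b}ᶜ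
      = Sum.inr '' ({a, b}ᶜ : Set (Fin (k^2+2))) := by
    ext (x | x) <;> simp [not_or, and_comm]
  rw [he, Set.ncard_image_of_injective _ Sum.inr_injective, c3 _ _ _ hab]

lemma locDeg_lr (a c : Fin (k^2+2)) (ha : a.val < k) (hc : c.val < k) :
    locDeg (Gk k) (.inl a) (.inr c) = (k - 1) + (k - 1) := by
  have hkn : k ≤ k^2 + 2 := by nlinarith
  rw [locDeg, nbhd_ls a ha, nbhd_rs c hc]
  have he : (Sum.inl '' {a}ᶜ ∪ Sum.inr '' {b : Fin (k^2+2) | b.val < k})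
      ∩ (Sum.inr '' {c}ᶜ ∪ Sum.inl '' {b : Fin (k^2+2) | b.val < k})
      = Sum.inl '' {x : Fin (k^2+2) | x ≠ a ∧ x.val < k}
        ∪ Sum.inr '' {x : Fin (k^2+2) | x ≠ c ∧ x.val < k} := by
    ext (x | x) <;> simp <;> tauto
  rw [he, Set.ncard_union_eq (disj_lr _ _) (Set.toFinite _) (Set.toFinite _),
    Set.ncard_image_of_injective _ Sum.inl_injective,
    Set.ncard_image_of_injective _ Sum.inr_injective, c4 _ _ hkn _ ha, c4 _ _ hkn _ hc]

lemma locDeg_comm {V : Type*} (G : SimpleGraph V) (v u : V) :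
    locDeg G v u = locDeg G u v := by
  rw [locDeg, locDeg, Set.inter_comm]

end Helpers

section Conn

open Set SimpleGraph

variable {k : ℕ}

lemma exists_mid_l (F : Finset (Sym2 (Fin (k^2+2) ⊕ Fin (k^2+2)))) (hF : F.card < k^2)
    (u v : Fin (k^2+2)) (huv : u ≠ v) (he : s(Sum.inl u, Sum.inl v) ∈ F) :
    ∃ w, w ≠ u ∧ w ≠ v ∧ s(Sum.inl u, Sum.inl w) ∉ F ∧ s(Sum.inl w, Sum.inl v) ∉ F := by
  by_contra hcon
  push_neg at hcon
  set T : Finset (Fin (k^2+2)) := (Finset.univ.erase u).erase v with hTdef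
  have hTcard : T.card = k^2 := by
    rw [hTdef, Finset.card_erase_of_mem (by simp [Ne.symm huv]),
      Finset.card_erase_of_mem (Finset.mem_univ u)]
    simp
  set f : Fin (k^2+2) → Sym2 (Fin (k^2+2) ⊕ Fin (k^2+2)) :=
    fun w => if s(Sum.inl u, Sum.inl w) ∈ F then s(Sum.inl u, Sum.inl w)
      else s(Sum.inl w, Sum.inl v) with hfdef
  have hmaps : ∀ w ∈ T, f w ∈ F.erase s(Sum.inl u, Sum.inl v) := by
    intro w hw
    have hwv : w ≠ v := (Finset.mem_erase.mp hw).1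
    have hwu : w ≠ u := (Finset.mem_erase.mp (Finset.mem_erase.mp hw).2).1
    rw [hfdef]
    by_cases h1 : s(Sum.inl u, Sum.inl w) ∈ F
    · simp only [h1, if_pos]
      refine Finset.mem_erase.mpr ⟨?_, h1⟩
      simp [Sym2.eq_iff, huv, hwv, hwu]
    · simp only [h1, if_neg, Finset.mem_erase]
      refine ⟨?_, hcon w hwu hwv h1⟩
      simp [Sym2.eq_iff, huv, hwv, hwu, Ne.symm huv]
  have hinj : Set.InjOn f T := by
    intro w hw w' hw' heq
    have hwv : w ≠ v := (Finset.mem_erase.mp hw).1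
    have hwu : w ≠ u := (Finset.mem_erase.mp (Finset.mem_erase.mp hw).2).1
    have hwv' : w' ≠ v := (Finset.mem_erase.mp hw').1
    have hwu' : w' ≠ u := (Finset.mem_erase.mp (Finset.mem_erase.mp hw').2).1
    have huv' := Ne.symm huv
    have hwu2 := Ne.symm hwu
    have hwv2 := Ne.symm hwv
    have hwu2' := Ne.symm hwu'
    have hwv2' := Ne.symm hwv'
    rw [hfdef] at heq
    by_cases h1 : s(Sum.inl u, Sum.inl w) ∈ F <;>
      by_cases h2 : s(Sum.inl u, Sum.inl w') ∈ F <;>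
      simp only [h1, h2, if_pos, if_neg, if_true, if_false] at heq <;>
      rw [Sym2.eq_iff] at heq <;>
      simp only [Sum.inl.injEq] at heq <;>
      tauto
  have hle := Finset.card_le_card_of_injOn f hmaps hinj
  rw [hTcard, Finset.card_erase_of_mem he] at hle
  omega

lemma exists_mid_r (F : Finset (Sym2 (Fin (k^2+2) ⊕ Fin (k^2+2)))) (hF : F.card < k^2)
    (u v : Fin (k^2+2)) (huv : u ≠ v) (he : s(Sum.inr u, Sum.inr v) ∈ F) :
    ∃ w, w ≠ u ∧ w ≠ v ∧ s(Sum.inr u, Sum.inr w) ∉ F ∧ s(Sum.inr w, Sum.inr v) ∉ F := by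
  by_contra hcon
  push_neg at hcon
  set T : Finset (Fin (k^2+2)) := (Finset.univ.erase u).erase v with hTdef
  have hTcard : T.card = k^2 := by
    rw [hTdef, Finset.card_erase_of_mem (by simp [Ne.symm huv]),
      Finset.card_erase_of_mem (Finset.mem_univ u)]
    simp
  set f : Fin (k^2+2) → Sym2 (Fin (k^2+2) ⊕ Fin (k^2+2)) :=
    fun w => if s(Sum.inr u, Sum.inr w) ∈ F then s(Sum.inr u, Sum.inr w)
      else s(Sum.inr w, Sum.inr v) with hfdef
  have hmaps : ∀ w ∈ T, f w ∈ F.erase s(Sum.inr u, Sum.inr v) := by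
    intro w hw
    have hwv : w ≠ v := (Finset.mem_erase.mp hw).1
    have hwu : w ≠ u := (Finset.mem_erase.mp (Finset.mem_erase.mp hw).2).1
    rw [hfdef]
    by_cases h1 : s(Sum.inr u, Sum.inr w) ∈ F
    · simp only [h1, if_pos]
      refine Finset.mem_erase.mpr ⟨?_, h1⟩
      simp [Sym2.eq_iff, huv, hwv, hwu]
    · simp only [h1, if_neg, Finset.mem_erase]
      refine ⟨?_, hcon w hwu hwv h1⟩
      simp [Sym2.eq_iff, huv, hwv, hwu, Ne.symm huv]
  have hinj : Set.InjOn f T := by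
    intro w hw w' hw' heq
    have hwv : w ≠ v := (Finset.mem_erase.mp hw).1
    have hwu : w ≠ u := (Finset.mem_erase.mp (Finset.mem_erase.mp hw).2).1
    have hwv' : w' ≠ v := (Finset.mem_erase.mp hw').1
    have hwu' : w' ≠ u := (Finset.mem_erase.mp (Finset.mem_erase.mp hw').2).1
    have huv' := Ne.symm huv
    have hwu2 := Ne.symm hwu
    have hwv2 := Ne.symm hwv
    have hwu2' := Ne.symm hwu'
    have hwv2' := Ne.symm hwv'
    rw [hfdef] at heq
    by_cases h1 : s(Sum.inr u, Sum.inr w) ∈ F <;>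
      by_cases h2 : s(Sum.inr u, Sum.inr w') ∈ F <;>
      simp only [h1, h2, if_pos, if_neg, if_true, if_false] at heq <;>
      rw [Sym2.eq_iff] at heq <;>
      simp only [Sum.inr.injEq] at heq <;>
      tauto
  have hle := Finset.card_le_card_of_injOn f hmaps hinj
  rw [hTcard, Finset.card_erase_of_mem he] at hle
  omega

lemma reach_l (F : Finset (Sym2 (Fin (k^2+2) ⊕ Fin (k^2+2)))) (hF : F.card < k^2)
    (u v : Fin (k^2+2)) :
    ((Gk k).deleteEdges ↑F).Reachable (Sum.inl u) (Sum.inl v) := by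
  by_cases huv : u = v
  · subst huv; rfl
  by_cases he : s(Sum.inl u, Sum.inl v) ∈ F
  · obtain ⟨w, hwu, hwv, h1, h2⟩ := exists_mid_l F hF u v huv he
    have a1 : ((Gk k).deleteEdges ↑F).Adj (Sum.inl u) (Sum.inl w) :=
      SimpleGraph.deleteEdges_adj.mpr ⟨Ne.symm hwu, by simpa using h1⟩
    have a2 : ((Gk k).deleteEdges ↑F).Adj (Sum.inl w) (Sum.inl v) :=
      SimpleGraph.deleteEdges_adj.mpr ⟨hwv, by simpa using h2⟩
    exact a1.reachable.trans a2.reachable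
  · exact (SimpleGraph.deleteEdges_adj.mpr ⟨huv, by simpa using he⟩).reachable

lemma reach_r (F : Finset (Sym2 (Fin (k^2+2) ⊕ Fin (k^2+2)))) (hF : F.card < k^2)
    (u v : Fin (k^2+2)) :
    ((Gk k).deleteEdges ↑F).Reachable (Sum.inr u) (Sum.inr v) := by
  by_cases huv : u = v
  · subst huv; rfl
  by_cases he : s(Sum.inr u, Sum.inr v) ∈ F
  · obtain ⟨w, hwu, hwv, h1, h2⟩ := exists_mid_r F hF u v huv he
    have a1 : ((Gk k).deleteEdges ↑F).Adj (Sum.inr u) (Sum.inr w) :=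
      SimpleGraph.deleteEdges_adj.mpr ⟨Ne.symm hwu, by simpa using h1⟩
    have a2 : ((Gk k).deleteEdges ↑F).Adj (Sum.inr w) (Sum.inr v) :=
      SimpleGraph.deleteEdges_adj.mpr ⟨hwv, by simpa using h2⟩
    exact a1.reachable.trans a2.reachable
  · exact (SimpleGraph.deleteEdges_adj.mpr ⟨huv, by simpa using he⟩).reachable

lemma exists_cross (F : Finset (Sym2 (Fin (k^2+2) ⊕ Fin (k^2+2)))) (hF : F.card < k^2) :
    ∃ a b : Fin (k^2+2), a.val < k ∧ b.val < k ∧ s(Sum.inl a, Sum.inr b) ∉ F := by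
  have hkn : k ≤ k^2 + 2 := by nlinarith
  by_contra hcon
  push_neg at hcon
  set g : Fin k × Fin k → Sym2 (Fin (k^2+2) ⊕ Fin (k^2+2)) :=
    fun p => s(Sum.inl (Fin.castLE hkn p.1), Sum.inr (Fin.castLE hkn p.2)) with hgdef
  have hmaps : ∀ p ∈ (Finset.univ : Finset (Fin k × Fin k)), g p ∈ F := by
    intro p _
    exact hcon _ _ (by simp) (by simp)
  have hinj : Set.InjOn g (Finset.univ : Finset (Fin k × Fin k)) := by
    intro p _ q _ heq
    rw [hgdef] at heq
    rw [Sym2.eq_iff] at heq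
    rcases heq with ⟨h1, h2⟩ | ⟨h1, h2⟩
    · have e1 : Fin.castLE hkn p.1 = Fin.castLE hkn q.1 := by
        simpa using h1
      have e2 : Fin.castLE hkn p.2 = Fin.castLE hkn q.2 := by
        simpa using h2
      exact Prod.ext ((Fin.castLE_injective hkn) e1) ((Fin.castLE_injective hkn) e2)
    · simp at h1
  have hle := Finset.card_le_card_of_injOn g hmaps hinj
  simp only [Finset.card_univ, Fintype.card_prod, Fintype.card_fin] at hle
  have : k * k = k^2 := by ring
  omega

lemma conn_of_small (F : Finset (Sym2 (Fin (k^2+2) ⊕ Fin (k^2+2)))) (hF : F.card < k^2) :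
    ((Gk k).deleteEdges ↑F).Connected := by
  obtain ⟨a, b, ha, hb, hab⟩ := exists_cross F hF
  have hcross : ((Gk k).deleteEdges ↑F).Adj (Sum.inl a) (Sum.inr b) :=
    SimpleGraph.deleteEdges_adj.mpr ⟨⟨ha, hb⟩, by simpa using hab⟩
  have hpre : ((Gk k).deleteEdges ↑F).Preconnected := by
    rintro (x | x) (y | y)
    · exact reach_l F hF x y
    · exact (reach_l F hF x a).trans (hcross.reachable.trans (reach_r F hF b y))
    · exact ((reach_l F hF y a).trans (hcross.reachable.trans (reach_r F hF b x))).symm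
    · exact reach_r F hF x y
  exact ⟨hpre⟩

lemma walk_isLeft (F : Finset (Sym2 (Fin (k^2+2) ⊕ Fin (k^2+2))))
    (hall : ∀ a b : Fin (k^2+2), a.val < k → b.val < k → s(Sum.inl a, Sum.inr b) ∈ F)
    {x y : Fin (k^2+2) ⊕ Fin (k^2+2)} (p : ((Gk k).deleteEdges ↑F).Walk x y) :
    x.isLeft = y.isLeft := by
  induction p with
  | nil => rfl
  | @cons x' z' y' h p ih =>
    rw [← ih]
    rw [SimpleGraph.deleteEdges_adj] at h
    rcases x' with a | a <;> rcases z' with b | b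
    · rfl
    · exact absurd (by simpa [Sym2.eq_swap] using hall a b h.1.1 h.1.2) h.2
    · exact absurd (by simpa [Sym2.eq_swap] using hall b a h.1.2 h.1.1) h.2
    · rfl

end Conn

/-- For every `k ≥ 3`, the graph `Gk k` is locally Ore, has minimum degree `k² + 1`,
and edge-connectivity `k²`. -/
theorem stmt9 (k : ℕ) (hk : 3 ≤ k) :
    LocallyOre (Gk k) ∧ minDeg (Gk k) = k ^ 2 + 1 ∧ edgeConn (Gk k) = k ^ 2 := by
  have hkn : k < k ^ 2 + 2 := by nlinarith
  refine ⟨?_, ?_, ?_⟩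
  · -- Locally Ore
    rintro (a | a) (b | b) (c | c) hu hw hne hnadj
    · exact absurd (fun h => hne (congrArg Sum.inl h)) hnadj
    · -- v = inl a, u = inl b, w = inr c
      have ha : a.val < k := hw.1
      have hc : c.val < k := hw.2
      have hb : ¬ b.val < k := fun h => hnadj ⟨h, hc⟩
      rw [degN_ls a ha, locDeg_ll a b ha hb (by exact hu), locDeg_lr a c ha hc]
      omega
    · -- v = inl a, u = inr b, w = inl c
      have ha : a.val < k := hu.1
      have hb : b.val < k := hu.2
      have hc : ¬ c.val < k := fun h => hnadj ⟨hb, h⟩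
      have hac : a ≠ c := hw
      rw [degN_ls a ha, locDeg_lr a b ha hb, locDeg_ll a c ha hc hac]
      omega
    · exact absurd (fun h => hne (congrArg Sum.inr h)) hnadj
    · exact absurd (fun h => hne (congrArg Sum.inl h)) hnadj
    · -- v = inr a, u = inl b, w = inr c
      have ha : a.val < k := hu.1
      have hb : b.val < k := hu.2
      have hc : ¬ c.val < k := fun h => hnadj ⟨hb, h⟩
      have hac : a ≠ c := hw
      rw [degN_rs a ha, locDeg_comm, locDeg_lr b a hb ha, locDeg_rr a c ha hc hac]
      omega
    · -- v = inr a, u = inr b, w = inl c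
      have ha : a.val < k := hw.1
      have hc : c.val < k := hw.2
      have hb : ¬ b.val < k := fun h => hnadj ⟨h, hc⟩
      have hab : a ≠ b := hu
      rw [degN_rs a ha, locDeg_rr a b ha hb hab, locDeg_comm _ _ (Sum.inl c),
        locDeg_lr c a hc ha]
      omega
    · exact absurd (fun h => hne (congrArg Sum.inr h)) hnadj
  · -- minimum degree
    have hmem : k ^ 2 + 1 ∈ {n | ∃ v, degN (Gk k) v = n} :=
      ⟨Sum.inl ⟨k, hkn⟩, degN_lb _ (by simp)⟩
    refine le_antisymm (Nat.sInf_le hmem) (le_csInf ⟨_, hmem⟩ ?_)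
    rintro n ⟨(a | a), rfl⟩
    · by_cases ha : a.val < k
      · rw [degN_ls a ha]; omega
      · rw [degN_lb a ha]
    · by_cases ha : a.val < k
      · rw [degN_rs a ha]; omega
      · rw [degN_rb a ha]
  · -- edge connectivity
    have hkn' : k ≤ k ^ 2 + 2 := le_of_lt hkn
    set F₀ : Finset (Sym2 (Fin (k^2+2) ⊕ Fin (k^2+2))) :=
      Finset.image (fun p : Fin k × Fin k =>
        s(Sum.inl (Fin.castLE hkn' p.1), Sum.inr (Fin.castLE hkn' p.2))) Finset.univ with hF₀def
    have hcard : F₀.card = k ^ 2 := by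
      rw [hF₀def, Finset.card_image_of_injective]
      · simp [sq]
      · intro p q heq
        rw [Sym2.eq_iff] at heq
        rcases heq with ⟨h1, h2⟩ | ⟨h1, h2⟩
        · exact Prod.ext (Fin.castLE_injective hkn' (by simpa using h1))
            (Fin.castLE_injective hkn' (by simpa using h2))
        · simp at h1
    have hsub : ↑F₀ ⊆ (Gk k).edgeSet := by
      intro e he
      simp only [hF₀def, Finset.coe_image, Set.mem_image] at he
      obtain ⟨p, -, rfl⟩ := he
      rw [SimpleGraph.mem_edgeSet]
      exact ⟨by simp, by simp⟩
    have hall : ∀ a b : Fin (k^2+2), a.val < k → b.val < k → s(Sum.inl a, Sum.inr b) ∈ F₀ := by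
      intro a b ha hb
      rw [hF₀def, Finset.mem_image]
      refine ⟨(⟨a.val, ha⟩, ⟨b.val, hb⟩), Finset.mem_univ _, ?_⟩
      congr 1 <;> ext <;> simp
    have hnc : ¬ ((Gk k).deleteEdges ↑F₀).Connected := by
      intro h
      have := h.preconnected (Sum.inl ⟨0, by omega⟩) (Sum.inr ⟨0, by omega⟩)
      obtain ⟨p⟩ := this
      simpa using walk_isLeft F₀ hall p
    have hmem : k ^ 2 ∈ {n | ∃ F : Finset (Sym2 (Fin (k^2+2) ⊕ Fin (k^2+2))),
        ↑F ⊆ (Gk k).edgeSet ∧ F.card = n ∧ ¬ ((Gk k).deleteEdges ↑F).Connected} :=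
      ⟨F₀, hsub, hcard, hnc⟩
    refine le_antisymm (Nat.sInf_le hmem) (le_csInf ⟨_, hmem⟩ ?_)
    rintro n ⟨F, -, rfl, hncon⟩
    by_contra hlt
    push_neg at hlt
    exact hncon (conn_of_small F hlt)
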